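/- Let kQ be the path algebra of a finite quiver Q over a field k, and let I be an admissible ideal. If ρ = λ₁w₁ + ... + λ_m w_m is a relation in I with all λ_i nonzero that is not strongly minimal (i.e., there exists a nonempty proper subset J of {1,...,m} and nonzero scalars b_i for i ∈ J with Σ_{i∈J} b_i w_i ∈ I), then there exists a strongly minimal relation ρ' = μ₁w₁ + ... + μ_m w_m ∈ I with μ₁ = λ₁. -/

import Mathlib

/-!
The path algebra `kQ` of a finite quiver is modelled by a `k`-vector space `V`
(in which the distinct paths `w i` form a linearly independent family), and the
admissible ideal `I` is modelled by the submodule of `V` it determines.  A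
relation `∑ i, μ i • w i` is *strongly minimal* if for every nonempty proper
subset `J` of its support and every choice of nonzero scalars `b i` (`i ∈ J`),
the combination `∑ i ∈ J, b i • w i` does not lie in `I`.
-/
open Classical in
def IsStronglyMinimal {k V : Type*} [Field k] [AddCommGroup V] [Module k V]
    (I : Submodule k V) {m : ℕ} (w : Fin m → V) (μ : Fin m → k) : Prop :=
  ∀ J : Finset (Fin m), J.Nonempty →
    J ⊂ Finset.univ.filter (fun i => μ i ≠ 0) →
    ∀ b : Fin m → k, (∀ i ∈ J, b i ≠ 0) → (∑ i ∈ J, b i • w i) ∉ I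

/-- If `ρ = λ₁ w₁ + ⋯ + λ_m w_m` is a relation in the
admissible ideal `I` with all `λ i` nonzero which is not strongly minimal, then
there is a strongly minimal relation `ρ' = μ₁ w₁ + ⋯ + μ_m w_m ∈ I` with
`μ₁ = λ₁`. -/
theorem exists_stronglyMinimal_relation {k V : Type*} [Field k] [AddCommGroup V]
    [Module k V] (I : Submodule k V) {m : ℕ} (w : Fin (m + 1) → V)
    (hw : LinearIndependent k w) (lam : Fin (m + 1) → k)
    (hlam : ∀ i, lam i ≠ 0)
    (hmem : (∑ i, lam i • w i) ∈ I)
    (hnsm : ¬ IsStronglyMinimal I w lam) :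
    ∃ μ : Fin (m + 1) → k, μ 0 = lam 0 ∧ (∑ i, μ i • w i) ∈ I ∧
      IsStronglyMinimal I w μ := by
  classical
  have hP : ∃ n : ℕ, ∃ μ : Fin (m+1) → k, μ 0 = lam 0 ∧ (∑ i, μ i • w i) ∈ I ∧
      (Finset.univ.filter (fun i => μ i ≠ 0)).card = n :=
    ⟨_, lam, rfl, hmem, rfl⟩
  obtain ⟨μ, hμ0, hμI, hcard⟩ := Nat.find_spec hP
  refine ⟨μ, hμ0, hμI, ?_⟩
  intro J hJne hJss b hb hbI
  have hJsub := hJss.subset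
  by_cases h0 : (0 : Fin (m+1)) ∈ J
  · -- replace by scaled b supported on J
    have hb0 : b 0 ≠ 0 := hb 0 h0
    set μ' : Fin (m+1) → k := fun i => if i ∈ J then (lam 0 / b 0) * b i else 0 with hμ'
    have h1 : μ' 0 = lam 0 := by
      simp only [hμ', if_pos h0]
      field_simp
    have hsum : (∑ i, μ' i • w i) = (lam 0 / b 0) • ∑ i ∈ J, b i • w i := by
      rw [Finset.smul_sum, ← Finset.sum_subset (Finset.subset_univ J)
        (f := fun i => μ' i • w i)]
      · refine Finset.sum_congr rfl fun i hi => ?_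
        simp [hμ', if_pos hi, mul_smul]
      · intro i _ hi
        simp [hμ', if_neg hi]
    have hI' : (∑ i, μ' i • w i) ∈ I := by rw [hsum]; exact I.smul_mem _ hbI
    have hsupp : (Finset.univ.filter (fun i => μ' i ≠ 0)) ⊆ J := by
      intro i hi
      simp only [Finset.mem_filter] at hi
      by_contra h
      exact hi.2 (by simp [hμ', if_neg h])
    have hlt : (Finset.univ.filter (fun i => μ' i ≠ 0)).card < Nat.find hP := by
      calc (Finset.univ.filter (fun i => μ' i ≠ 0)).card ≤ J.card :=
            Finset.card_le_card hsupp
        _ < (Finset.univ.filter (fun i => μ i ≠ 0)).card := Finset.card_lt_card hJss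
        _ = Nat.find hP := hcard
    exact Nat.find_min hP hlt ⟨μ', h1, hI', rfl⟩
  · obtain ⟨j, hj⟩ := hJne
    have hbj : b j ≠ 0 := hb j hj
    set μ' : Fin (m+1) → k :=
      fun i => μ i - (μ j / b j) * (if i ∈ J then b i else 0) with hμ'
    have h1 : μ' 0 = lam 0 := by simp [hμ', if_neg h0, hμ0]
    have h2 : (∑ i, ((μ j / b j) * (if i ∈ J then b i else 0)) • w i)
        = (μ j / b j) • ∑ i ∈ J, b i • w i := by
      rw [Finset.smul_sum, ← Finset.sum_subset (Finset.subset_univ J)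
        (f := fun i => ((μ j / b j) * (if i ∈ J then b i else 0)) • w i)]
      · refine Finset.sum_congr rfl fun i hi => ?_
        simp [if_pos hi, mul_smul]
      · intro i _ hi
        simp [if_neg hi]
    have hsum : (∑ i, μ' i • w i)
        = (∑ i, μ i • w i) - (μ j / b j) • ∑ i ∈ J, b i • w i := by
      rw [← h2, ← Finset.sum_sub_distrib]
      exact Finset.sum_congr rfl fun i _ => by rw [hμ', sub_smul]
    have hI' : (∑ i, μ' i • w i) ∈ I := by
      rw [hsum]; exact I.sub_mem hμI (I.smul_mem _ hbI)
    have hμ'j : μ' j = 0 := by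
      simp only [hμ', if_pos hj]
      field_simp
      simp
    have hsupp : (Finset.univ.filter (fun i => μ' i ≠ 0))
        ⊆ (Finset.univ.filter (fun i => μ i ≠ 0)).erase j := by
      intro i hi
      simp only [Finset.mem_filter] at hi
      rw [Finset.mem_erase, Finset.mem_filter]
      constructor
      · rintro rfl; exact hi.2 hμ'j
      · refine ⟨Finset.mem_univ i, fun h => ?_⟩
        have hiJ : i ∉ J := fun hiJ => by
          have := hJsub hiJ
          rw [Finset.mem_filter] at this
          exact this.2 h
        exact hi.2 (by simp [hμ', if_neg hiJ, h])
    have hjmem : j ∈ Finset.univ.filter (fun i => μ i ≠ 0) := hJsub hj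
    have hlt : (Finset.univ.filter (fun i => μ' i ≠ 0)).card < Nat.find hP := by
      calc (Finset.univ.filter (fun i => μ' i ≠ 0)).card
          ≤ ((Finset.univ.filter (fun i => μ i ≠ 0)).erase j).card :=
            Finset.card_le_card hsupp
        _ < (Finset.univ.filter (fun i => μ i ≠ 0)).card :=
            Finset.card_erase_lt_of_mem hjmem
        _ = Nat.find hP := hcard
    exact Nat.find_min hP hlt ⟨μ', h1, hI', rfl⟩
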